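/- In the Poincaré upper half-plane model restricted to a cusp S¹_L × (a²,∞) with metric y⁻²(dx²+dy²), the Riemannian distance is given by d(z,z') = arccosh( (y² + y'² + d_{S_L}(x,x')²) / (2yy') ), where d_{S_L} is the distance on the circle of radius L. -/
import Mathlib


open UpperHalfPlane

/-- The inverse hyperbolic cosine. -/
noncomputable def arcosh (x : ℝ) : ℝ := Real.log (x + Real.sqrt (x ^ 2 - 1))

lemma arcosh_cosh {x : ℝ} (hx : 0 ≤ x) : arcosh (Real.cosh x) = x := by
  have h1 : Real.cosh x ^ 2 - 1 = Real.sinh x ^ 2 := by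
    have := Real.cosh_sq_sub_sinh_sq x; nlinarith
  have h2 : Real.sqrt (Real.cosh x ^ 2 - 1) = Real.sinh x := by
    rw [h1, Real.sqrt_sq (Real.sinh_nonneg_iff.2 hx)]
  rw [arcosh, h2, Real.cosh_add_sinh, Real.log_exp]

lemma arcosh_mono {a b : ℝ} (ha : 1 ≤ a) (hab : a ≤ b) : arcosh a ≤ arcosh b := by
  have h1 : (0:ℝ) < a + Real.sqrt (a ^ 2 - 1) := by positivity
  apply Real.log_le_log h1
  have : Real.sqrt (a ^ 2 - 1) ≤ Real.sqrt (b ^ 2 - 1) := by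
    apply Real.sqrt_le_sqrt; nlinarith
  linarith

lemma round_min (x : ℝ) (n : ℤ) : |x - round x| ≤ |x - n| := by
  rcases eq_or_ne n (round x) with rfl | h
  · exact le_refl _
  · have h1 : (1:ℝ) ≤ |(round x : ℝ) - n| := by
      have : round x - n ≠ 0 := sub_ne_zero.2 (Ne.symm h)
      exact_mod_cast Int.one_le_abs (by exact_mod_cast this)
    have h2 : |x - round x| ≤ 1/2 := abs_sub_round x
    have h3 : |(round x : ℝ) - n| ≤ |(round x : ℝ) - x| + |x - n| := by
      calc |(round x : ℝ) - n| = |((round x : ℝ) - x) + (x - n)| := by ring_nf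
        _ ≤ |(round x : ℝ) - x| + |x - n| := abs_add_le _ _
    have h4 : |(round x : ℝ) - x| = |x - round x| := abs_sub_comm _ _
    linarith

theorem cusp_distance_formula (L a : ℝ) (hL : 0 < L)
    (z z' : UpperHalfPlane) (hz : a ^ 2 < z.im) (hz' : a ^ 2 < z'.im) :
    (⨅ n : ℤ, dist z (((2 * Real.pi * L * n : ℝ)) +ᵥ z'))
      = arcosh ((z.im ^ 2 + z'.im ^ 2
          + (⨅ n : ℤ, |z.re - (z'.re + 2 * Real.pi * L * n)|) ^ 2)
        / (2 * z.im * z'.im)) := by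
  have hy : 0 < z.im := z.im_pos
  have hy' : 0 < z'.im := z'.im_pos
  have hα : 0 < 2 * Real.pi * L := by positivity
  set α := 2 * Real.pi * L with hαdef
  set c := z.re - z'.re with hc
  -- the distance on the circle, as a function of n
  set D : ℤ → ℝ := fun n => |z.re - (z'.re + α * n)| with hD
  -- g composed with D gives cosh of the hyperbolic distance
  set g : ℝ → ℝ := fun d => (z.im ^ 2 + z'.im ^ 2 + d ^ 2) / (2 * z.im * z'.im) with hg
  have hg1 : ∀ d : ℝ, 1 ≤ g d := by
    intro d
    rw [hg, le_div_iff₀ (by positivity)]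
    nlinarith [sq_nonneg (z.im - z'.im), sq_nonneg d]
  -- distance formula for each shift
  have hdist : ∀ n : ℤ, dist z ((α * n : ℝ) +ᵥ z') = arcosh (g (D n)) := by
    intro n
    have hcosh := UpperHalfPlane.cosh_dist z ((α * n : ℝ) +ᵥ z')
    have him : ((α * n : ℝ) +ᵥ z').im = z'.im := vadd_im _ _
    have hre : ((α * n : ℝ) +ᵥ z').re = α * n + z'.re := vadd_re _ _
    have hdc : dist (z : ℂ) (((α * n : ℝ) +ᵥ z' : UpperHalfPlane) : ℂ) ^ 2
        = (z.re - (z'.re + α * n)) ^ 2 + (z.im - z'.im) ^ 2 := by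
      rw [Complex.dist_eq_re_im]
      rw [Real.sq_sqrt (by positivity)]
      simp only [UpperHalfPlane.coe_re, UpperHalfPlane.coe_im, hre, him]
      ring
    have hgD : g (D n) = Real.cosh (dist z ((α * n : ℝ) +ᵥ z')) := by
      rw [hcosh, him, hdc, hg, hD]
      simp only [sq_abs]
      field_simp
      ring
    rw [hgD, arcosh_cosh dist_nonneg]
  -- the minimizing shift
  set n₀ : ℤ := round (c / α) with hn₀
  have hDmin : ∀ n : ℤ, D n₀ ≤ D n := by
    intro n
    have h := round_min (c / α) n
    have key : ∀ m : ℤ, D m = α * |c / α - m| := by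
      intro m
      show |z.re - (z'.re + α * m)| = α * |c / α - m|
      have heq : z.re - (z'.re + α * m) = α * (c / α - m) := by
        rw [hc]; field_simp; ring
      rw [heq, abs_mul, abs_of_pos hα]
    rw [key n, key n₀]
    exact mul_le_mul_of_nonneg_left h hα.le
  -- compute the infimum of D
  have hDinf : (⨅ n : ℤ, |z.re - (z'.re + 2 * Real.pi * L * n)|) = D n₀ := by
    apply le_antisymm
    · exact ciInf_le ⟨0, fun x ⟨n, hn⟩ => hn ▸ abs_nonneg _⟩ n₀
    · exact le_ciInf hDmin
  -- compute the infimum of distances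
  have hmain : (⨅ n : ℤ, dist z (((2 * Real.pi * L * n : ℝ)) +ᵥ z')) = arcosh (g (D n₀)) := by
    apply le_antisymm
    · exact (ciInf_le ⟨0, fun x ⟨n, hn⟩ => hn ▸ dist_nonneg⟩ n₀).trans_eq (hdist n₀)
    · apply le_ciInf
      intro n
      rw [hdist n]
      apply arcosh_mono (hg1 _)
      show (z.im ^ 2 + z'.im ^ 2 + D n₀ ^ 2) / (2 * z.im * z'.im)
          ≤ (z.im ^ 2 + z'.im ^ 2 + D n ^ 2) / (2 * z.im * z'.im)
      have hD0 : 0 ≤ D n₀ := abs_nonneg _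
      have h := hDmin n
      gcongr
  rw [hmain, hDinf]
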